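/- The natural ℚ-algebra homomorphism ℚ[k,η]/⟨k³, η¹⁴−4kη¹³+16k²η¹²⟩ → A := ℚ[k,h,η]/⟨k³, η¹⁴−4kη¹³+16k²η¹², h²−hk+k²⟩ (sending k ↦ k, η ↦ η) is injective, and A is a free module of rank 2 over the image, with basis {1, h}. (A is the Chow ring of the exceptional divisor E = Fl(V) ×_{ℙV} C₄, and the complement of the image in the degree-shifted summand generated by h computes the kernel of the pushforward to the Chow ring of C₄.) -/

import Mathlib

open MvPolynomial

noncomputable section

/-- Variables of ℚ[k,η]: `X 0 = k`, `X 1 = η`.  The ideal ⟨k³, η¹⁴−4kη¹³+16k²η¹²⟩. -/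
def JB : Ideal (MvPolynomial (Fin 2) ℚ) :=
  Ideal.span {X 0 ^ 3, X 1 ^ 14 - 4 * X 0 * X 1 ^ 13 + 16 * X 0 ^ 2 * X 1 ^ 12}

/-- B = ℚ[k,η]/⟨k³, η¹⁴−4kη¹³+16k²η¹²⟩, the Chow ring of C₄. -/
abbrev B := MvPolynomial (Fin 2) ℚ ⧸ JB

/-- Variables of ℚ[k,h,η]: `X 0 = k`, `X 1 = h`, `X 2 = η`.  The ideal
⟨k³, η¹⁴−4kη¹³+16k²η¹², h²−hk+k²⟩. -/
def JA : Ideal (MvPolynomial (Fin 3) ℚ) :=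
  Ideal.span {X 0 ^ 3, X 2 ^ 14 - 4 * X 0 * X 2 ^ 13 + 16 * X 0 ^ 2 * X 2 ^ 12,
    X 1 ^ 2 - X 1 * X 0 + X 0 ^ 2}

/-- A = ℚ[k,h,η]/⟨k³, η¹⁴−4kη¹³+16k²η¹², h²−hk+k²⟩, the Chow ring of the
exceptional divisor E. -/
abbrev A := MvPolynomial (Fin 3) ℚ ⧸ JA

lemma JB_ne_top : JB ≠ ⊤ := by
  intro h
  have h1 : (1 : MvPolynomial (Fin 2) ℚ) ∈ JB := h ▸ Submodule.mem_top
  have hle : JB ≤ RingHom.ker (aeval (0 : Fin 2 → ℚ)).toRingHom := by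
    rw [JB, Ideal.span_le]
    rintro p (rfl | rfl) <;> simp [RingHom.mem_ker]
  have := hle h1
  simp [RingHom.mem_ker] at this

instance : Nontrivial B := Ideal.Quotient.nontrivial_iff.mpr JB_ne_top

def κ : B := Ideal.Quotient.mk JB (X 0)

def q : Polynomial B := Polynomial.X ^ 2 - Polynomial.C κ * Polynomial.X + Polynomial.C (κ ^ 2)

lemma q_monic : q.Monic := by unfold q; monicity!

lemma q_natDegree : q.natDegree = 2 := by unfold q; compute_degree!

lemma rename_gen2 : (rename (![0,2] : Fin 2 → Fin 3))
      (X 1 ^ 14 - 4 * X 0 * X 1 ^ 13 + 16 * X 0 ^ 2 * X 1 ^ 12)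
    = (X 2 ^ 14 - 4 * X 0 * X 2 ^ 13 + 16 * X 0 ^ 2 * X 2 ^ 12 : MvPolynomial (Fin 3) ℚ) := by
  simp only [map_add, map_sub, map_mul, map_pow, map_ofNat, rename_X]
  norm_num [Matrix.cons_val_zero, Matrix.cons_val_one]

lemma rename_mem_JA : ∀ p ∈ JB, rename (![0, 2] : Fin 2 → Fin 3) p ∈ JA := by
  intro p hp
  have hle : JB ≤ Ideal.comap (rename (![0, 2] : Fin 2 → Fin 3)).toRingHom JA := by
    rw [JB, Ideal.span_le]
    rintro r (rfl | rfl) <;> rw [SetLike.mem_coe, Ideal.mem_comap] <;> rw [JA]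
    · refine Ideal.subset_span (Set.mem_insert_iff.mpr (Or.inl ?_))
      simp only [AlgHom.toRingHom_eq_coe, RingHom.coe_coe, map_pow, rename_X]
      norm_num
    · refine Ideal.subset_span (Set.mem_insert_iff.mpr (Or.inr
        (Set.mem_insert_iff.mpr (Or.inl ?_))))
      exact rename_gen2
  exact hle hp

def f : B →ₐ[ℚ] A :=
  Ideal.Quotient.liftₐ JB ((Ideal.Quotient.mkₐ ℚ JA).comp (rename (![0, 2] : Fin 2 → Fin 3)))
    (fun p hp => by
      simp only [AlgHom.comp_apply, Ideal.Quotient.mkₐ_eq_mk, Ideal.Quotient.eq_zero_iff_mem]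
      exact rename_mem_JA p hp)

lemma f_mk (p : MvPolynomial (Fin 2) ℚ) :
    f (Ideal.Quotient.mk JB p) = Ideal.Quotient.mk JA (rename (![0, 2] : Fin 2 → Fin 3) p) := by
  simp [f]
  rfl

def v : Fin 3 → AdjoinRoot q :=
  ![algebraMap B _ (Ideal.Quotient.mk JB (X 0)), AdjoinRoot.root q,
    algebraMap B _ (Ideal.Quotient.mk JB (X 1))]

lemma v0 : v 0 = algebraMap B _ (Ideal.Quotient.mk JB (X 0)) := rfl
lemma v1 : v 1 = AdjoinRoot.root q := rfl
lemma v2 : v 2 = algebraMap B _ (Ideal.Quotient.mk JB (X 1)) := rfl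

lemma aeval_gen1 : aeval v (X 0 ^ 3 : MvPolynomial (Fin 3) ℚ) = 0 := by
  have h : (Ideal.Quotient.mk JB) (X 0 ^ 3) = 0 :=
    Ideal.Quotient.eq_zero_iff_mem.mpr (Ideal.subset_span (Set.mem_insert _ _))
  rw [map_pow, aeval_X, v0, ← map_pow, ← map_pow, h, map_zero]

lemma aeval_gen2 :
    aeval v (X 2 ^ 14 - 4 * X 0 * X 2 ^ 13 + 16 * X 0 ^ 2 * X 2 ^ 12 : MvPolynomial (Fin 3) ℚ)
      = 0 := by
  have h : (Ideal.Quotient.mk JB) (X 1 ^ 14 - 4 * X 0 * X 1 ^ 13 + 16 * X 0 ^ 2 * X 1 ^ 12) = 0 :=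
    Ideal.Quotient.eq_zero_iff_mem.mpr (Ideal.subset_span
      (Set.mem_insert_iff.mpr (Or.inr rfl)))
  have key : aeval v (X 2 ^ 14 - 4 * X 0 * X 2 ^ 13 + 16 * X 0 ^ 2 * X 2 ^ 12 :
      MvPolynomial (Fin 3) ℚ)
      = algebraMap B (AdjoinRoot q) (Ideal.Quotient.mk JB
          (X 1 ^ 14 - 4 * X 0 * X 1 ^ 13 + 16 * X 0 ^ 2 * X 1 ^ 12)) := by
    simp only [map_add, map_sub, map_mul, map_pow, map_ofNat, aeval_X, v0, v2]
  rw [key, h, map_zero]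

lemma aeval_gen3 :
    aeval v (X 1 ^ 2 - X 1 * X 0 + X 0 ^ 2 : MvPolynomial (Fin 3) ℚ) = 0 := by
  have h : AdjoinRoot.mk q (Polynomial.X ^ 2 - Polynomial.C κ * Polynomial.X
      + Polynomial.C (κ ^ 2)) = 0 := AdjoinRoot.mk_self
  simp only [map_add, map_sub, map_mul, map_pow, AdjoinRoot.mk_X, AdjoinRoot.mk_C] at h
  simp only [map_add, map_sub, map_mul, map_pow, aeval_X, v0, v1, AdjoinRoot.algebraMap_eq, κ]
  simp only [κ] at h
  linear_combination h

def φ : A →ₐ[ℚ] AdjoinRoot q :=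
  Ideal.Quotient.liftₐ JA (aeval v)
    (fun p hp => by
      have hle : JA ≤ RingHom.ker (aeval v).toRingHom := by
        rw [JA, Ideal.span_le]
        rintro r (rfl | rfl | rfl)
        · exact aeval_gen1
        · exact aeval_gen2
        · exact aeval_gen3
      exact hle hp)

lemma φ_mk (p : MvPolynomial (Fin 3) ℚ) : φ (Ideal.Quotient.mk JA p) = aeval v p := by
  simp [φ]
  rfl

def hA : A := Ideal.Quotient.mk JA (X 1)

lemma φ_hA : φ hA = AdjoinRoot.root q := by
  rw [hA, φ_mk, aeval_X, v1]

set_option synthInstance.maxHeartbeats 1000000 in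
instance instTower : IsScalarTower ℚ B (AdjoinRoot q) := inferInstance

lemma φ_f (b : B) : φ (f b) = algebraMap B (AdjoinRoot q) b := by
  obtain ⟨p, rfl⟩ := Ideal.Quotient.mk_surjective b
  rw [f_mk, φ_mk, aeval_rename]
  have hfun : (v ∘ (![0, 2] : Fin 2 → Fin 3))
      = (⇑((IsScalarTower.toAlgHom ℚ B (AdjoinRoot q)).comp (Ideal.Quotient.mkₐ ℚ JB))
        ∘ (X : Fin 2 → MvPolynomial (Fin 2) ℚ)) := by
    funext i
    fin_cases i <;> rfl
  rw [hfun, ← MvPolynomial.aeval_unique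
    ((IsScalarTower.toAlgHom ℚ B (AdjoinRoot q)).comp (Ideal.Quotient.mkₐ ℚ JB))]
  rfl
lemma eval₂_q : Polynomial.eval₂ (f : B →+* A) hA q = 0 := by
  have hz : Ideal.Quotient.mk JA (X 1 ^ 2 - X 1 * X 0 + X 0 ^ 2) = 0 :=
    Ideal.Quotient.eq_zero_iff_mem.mpr (Ideal.subset_span
      (Set.mem_insert_iff.mpr (Or.inr (Set.mem_insert_iff.mpr (Or.inr rfl)))))
  simp only [map_add, map_sub, map_mul, map_pow] at hz
  have hfκ : f κ = Ideal.Quotient.mk JA (X 0) := by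
    rw [κ, f_mk]
    norm_num
  show Polynomial.eval₂ (f : B →+* A) hA
    (Polynomial.X ^ 2 - Polynomial.C κ * Polynomial.X + Polynomial.C (κ ^ 2)) = 0
  simp only [Polynomial.eval₂_add, Polynomial.eval₂_sub, Polynomial.eval₂_mul,
    Polynomial.eval₂_pow, Polynomial.eval₂_X, Polynomial.eval₂_C, RingHom.coe_coe, map_pow, hfκ]
  rw [hA]
  linear_combination hz

def ψ : AdjoinRoot q →+* A := AdjoinRoot.lift (f : B →+* A) hA eval₂_q

lemma ψ_of (b : B) : ψ (algebraMap B (AdjoinRoot q) b) = f b := by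
  rw [AdjoinRoot.algebraMap_eq]; exact AdjoinRoot.lift_of eval₂_q

lemma ψ_root : ψ (AdjoinRoot.root q) = hA := AdjoinRoot.lift_root eval₂_q

lemma ψ_φ (a : A) : ψ (φ a) = a := by
  obtain ⟨p, rfl⟩ := Ideal.Quotient.mk_surjective a
  rw [φ_mk]
  have key : ψ.comp (aeval v : MvPolynomial (Fin 3) ℚ →ₐ[ℚ] AdjoinRoot q).toRingHom
      = (Ideal.Quotient.mk JA : MvPolynomial (Fin 3) ℚ →+* A) := by
    apply MvPolynomial.ringHom_ext
    · intro r
      have h1 : (aeval v) (C r : MvPolynomial (Fin 3) ℚ) = algebraMap ℚ (AdjoinRoot q) r :=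
        aeval_C _ _
      have h2 : algebraMap ℚ (AdjoinRoot q) r
          = algebraMap B (AdjoinRoot q) (algebraMap ℚ B r) :=
        IsScalarTower.algebraMap_apply ℚ B (AdjoinRoot q) r
      simp only [RingHom.comp_apply, AlgHom.toRingHom_eq_coe, RingHom.coe_coe, h1, h2, ψ_of]
      rw [AlgHom.commutes]
      rfl
    · intro i
      fin_cases i
      · show ψ (aeval v (X 0)) = _
        rw [aeval_X, v0, ψ_of, f_mk (X 0)]
        norm_num
      · show ψ (aeval v (X 1)) = _
        rw [aeval_X, v1, ψ_root, hA]
        rfl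
      · show ψ (aeval v (X 2)) = _
        rw [aeval_X, v2, ψ_of, f_mk (X 1)]
        norm_num
        rfl
  exact RingHom.congr_fun key p

def pb : PowerBasis B (AdjoinRoot q) := AdjoinRoot.powerBasis' q_monic

def bas : Module.Basis (Fin 2) B (AdjoinRoot q) := pb.basis.reindex (finCongr q_natDegree)

lemma bas_apply (i : Fin 2) : bas i = AdjoinRoot.root q ^ (i : ℕ) := by
  rw [bas, Module.Basis.reindex_apply, PowerBasis.coe_basis]
  simp [pb, AdjoinRoot.powerBasis']
  rfl

lemma rep (c : Fin 2 → B) :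
    bas.equivFun.symm c = algebraMap B (AdjoinRoot q) (c 0)
      + algebraMap B (AdjoinRoot q) (c 1) * AdjoinRoot.root q := by
  rw [Module.Basis.equivFun_symm_apply, Fin.sum_univ_two, bas_apply, bas_apply]
  simp [Algebra.smul_def]


/-- The natural map B → A (k ↦ k, η ↦ η) is injective, and A is a free module of
rank 2 over the image, with basis {1, h}: every element of A is uniquely of the form
f(b₀) + f(b₁)·h with b₀, b₁ ∈ B. -/
theorem chow_E_free_over_chow_C4 :
    ∃ f : B →ₐ[ℚ] A,
      (∀ p : MvPolynomial (Fin 2) ℚ,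
        f (Ideal.Quotient.mk JB p) =
          Ideal.Quotient.mk JA (rename (![0, 2] : Fin 2 → Fin 3) p)) ∧
      Function.Injective f ∧
      ∀ a : A, ∃! bc : B × B,
        a = f bc.1 + f bc.2 * Ideal.Quotient.mk JA (X 1) := by
  refine ⟨f, fun p => f_mk p, ?_, ?_⟩
  · intro b b' h
    have h2 : algebraMap B (AdjoinRoot q) b = algebraMap B (AdjoinRoot q) b' := by
      rw [← φ_f, ← φ_f, h]
    have h3 : bas.equivFun.symm ![b, 0] = bas.equivFun.symm ![b', 0] := by
      rw [rep, rep]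
      simpa using h2
    have h4 := bas.equivFun.symm.injective h3
    have := congrFun h4 0
    simpa using this
  · intro a
    set c : Fin 2 → B := bas.equivFun (φ a) with hc
    have hrep : φ a = algebraMap B (AdjoinRoot q) (c 0)
        + algebraMap B (AdjoinRoot q) (c 1) * AdjoinRoot.root q := by
      rw [← rep, hc, LinearEquiv.symm_apply_apply]
    have hex : a = f (c 0) + f (c 1) * Ideal.Quotient.mk JA (X 1) := by
      have := congrArg ψ hrep
      rw [ψ_φ, map_add, map_mul, ψ_of, ψ_of, ψ_root] at this
      exact this
    refine ⟨(c 0, c 1), hex, ?_⟩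
    rintro ⟨b0, b1⟩ hy
    have hφ : φ a = algebraMap B (AdjoinRoot q) b0
        + algebraMap B (AdjoinRoot q) b1 * AdjoinRoot.root q := by
      rw [hy, map_add, map_mul, φ_f, φ_f,
        show (Ideal.Quotient.mk JA) (X 1) = hA from rfl, φ_hA]
    have h5 : bas.equivFun.symm ![b0, b1] = bas.equivFun.symm c := by
      rw [rep]
      simp only [Matrix.cons_val_zero, Matrix.cons_val_one, Matrix.head_cons]
      rw [← hφ, hrep, ← rep]
    have h6 := bas.equivFun.symm.injective h5
    have e0 := congrFun h6 0
    have e1 := congrFun h6 1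
    simp only [Matrix.cons_val_zero, Matrix.cons_val_one, Matrix.head_cons] at e0 e1
    exact Prod.ext e0 e1
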